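/- Let q be an odd prime power, (γ, δ, N) a gamma triple with N | q−1, t ∈ F_q^×, and let σ_k ∈ Gal(ℚ(ζ_{q−1})/ℚ) correspond to k ∈ (ℤ/(q−1)ℤ)^× via σ_k(ζ_{q−1}) = ζ_{q−1}^k. Then σ_k(F_q(γ, δ, N | t)) = F_q(γ, kδ, N | t). -/

import Mathlib

open Polynomial

/-- `ζ_N = e^{2πi/N}`. -/
noncomputable def zetaN (N : ℕ) : ℂ := Complex.exp (2 * Real.pi * Complex.I / N)

lemma zetaN_prim {n : ℕ} (hn : 0 < n) : IsPrimitiveRoot (zetaN n) n :=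
  Complex.isPrimitiveRoot_exp n hn.ne'

lemma zetaN_ne_zero (N : ℕ) : zetaN N ≠ 0 := Complex.exp_ne_zero _

lemma sigma_pow_of_pow_eq_one {n : ℕ} (hn : 0 < n) {ζ : ℂ} (hζ : IsPrimitiveRoot ζ n)
    {k : ℕ} (σ : ℂ →+* ℂ) (hσ : σ ζ = ζ ^ k) {z : ℂ} (hz : z ^ n = 1) : σ z = z ^ k := by
  haveI : NeZero n := ⟨hn.ne'⟩
  obtain ⟨i, -, rfl⟩ := hζ.eq_pow_of_pow_eq_one hz
  rw [map_pow, hσ, ← pow_mul, mul_comm, pow_mul]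

lemma exp_zpow {n : ℕ} (hn : 0 < n) (m : ℤ) :
    Complex.exp (2 * Real.pi * Complex.I * m / (n : ℂ)) = zetaN n ^ m := by
  rw [zetaN, ← Complex.exp_int_mul]
  congr 1
  ring

lemma zetaN_mul {N n e : ℕ} (hN : 0 < N) (hn : 0 < n) (he : n = N * e) :
    zetaN N = zetaN n ^ (e : ℤ) := by
  have he0 : 0 < e := by
    rcases Nat.eq_zero_or_pos e with h | h
    · subst h; simp at he; omega
    · exact h
  have hn0 : (n : ℂ) ≠ 0 := Nat.cast_ne_zero.mpr hn.ne'
  have hN0 : (N : ℂ) ≠ 0 := Nat.cast_ne_zero.mpr hN.ne'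
  have hcast : (n : ℂ) = (N : ℂ) * (e : ℂ) := by exact_mod_cast congrArg (Nat.cast : ℕ → ℂ) he
  have he0' : (e : ℂ) ≠ 0 := Nat.cast_ne_zero.mpr he0.ne'
  rw [zetaN, zetaN, zpow_natCast, ← Complex.exp_nat_mul]
  congr 1
  rw [hcast]
  field_simp

lemma zpow_cond {n : ℕ} (hn : 0 < n) {x y : ℤ} :
    zetaN n ^ x = zetaN n ^ y ↔ (n : ℤ) ∣ (x - y) := by
  rw [← (zetaN_prim hn).zpow_eq_one_iff_dvd, zpow_sub₀ (zetaN_ne_zero n),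
    div_eq_one_iff_eq (zpow_ne_zero _ (zetaN_ne_zero n))]

lemma prod_zpow' {ι : Type*} (s : Finset ι) (u : ℂ) (hu : u ≠ 0) (f : ι → ℤ) :
    ∏ i ∈ s, u ^ f i = u ^ (∑ i ∈ s, f i) := by
  induction s using Finset.cons_induction with
  | empty => simp
  | cons a s ha ih => rw [Finset.prod_cons, Finset.sum_cons, ih, zpow_add₀ hu]

lemma rootMult_X_pow_sub_C {a : ℕ} (ha : 0 < a) {cc x : ℂ} (hcc : cc ≠ 0) :
    (X ^ a - C cc : Polynomial ℂ).rootMultiplicity x = if x ^ a = cc then 1 else 0 := by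
  have hne : (X ^ a - C cc : Polynomial ℂ) ≠ 0 := X_pow_sub_C_ne_zero ha cc
  by_cases h : x ^ a = cc
  · simp only [h, if_true]
    have hroot : IsRoot (X ^ a - C cc : Polynomial ℂ) x := by
      simp [IsRoot, h]
    have h1 : 1 ≤ (X ^ a - C cc : Polynomial ℂ).rootMultiplicity x :=
      (rootMultiplicity_pos hne).mpr hroot
    have hsq : Squarefree (X ^ a - C cc : Polynomial ℂ) := by
      refine (separable_X_pow_sub_C cc ?_ hcc).squarefree
      exact_mod_cast Nat.cast_ne_zero.mpr ha.ne'
    have h2 : (X ^ a - C cc : Polynomial ℂ).rootMultiplicity x ≤ 1 := by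
      by_contra hgt
      push_neg at hgt
      have : (X - C x) * (X - C x) ∣ (X ^ a - C cc : Polynomial ℂ) := by
        have := pow_rootMultiplicity_dvd (X ^ a - C cc : Polynomial ℂ) x
        calc (X - C x) * (X - C x) = (X - C x) ^ 2 := by ring
        _ ∣ (X - C x) ^ (X ^ a - C cc : Polynomial ℂ).rootMultiplicity x := pow_dvd_pow _ hgt
        _ ∣ _ := this
      exact (Polynomial.not_isUnit_X_sub_C x) (hsq _ this)
    omega
  · simp only [h, if_false]
    exact rootMultiplicity_eq_zero (by simp [IsRoot, sub_eq_zero, h])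

lemma rootMult_prod {ι : Type*} (s : Finset ι) (a : ι → ℕ) (cc : ι → ℂ)
    (ha : ∀ i ∈ s, 0 < a i) (hcc : ∀ i ∈ s, cc i ≠ 0) (x : ℂ) :
    (∏ i ∈ s, (X ^ a i - C (cc i))).rootMultiplicity x
      = (s.filter (fun i => x ^ a i = cc i)).card := by
  classical
  induction s using Finset.cons_induction with
  | empty => simp [rootMultiplicity_eq_zero]
  | cons j s hj ih =>
    have hne : ∀ i ∈ s, (X ^ a i - C (cc i) : Polynomial ℂ) ≠ 0 := fun i hi =>
      X_pow_sub_C_ne_zero (ha i (Finset.mem_cons_of_mem hi)) _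
    have hprodne : (∏ i ∈ s, (X ^ a i - C (cc i))) ≠ 0 := Finset.prod_ne_zero_iff.mpr hne
    have hjne : (X ^ a j - C (cc j) : Polynomial ℂ) ≠ 0 :=
      X_pow_sub_C_ne_zero (ha j (Finset.mem_cons_self j s)) _
    rw [Finset.prod_cons, rootMultiplicity_mul (mul_ne_zero hjne hprodne),
      ih (fun i hi => ha i (Finset.mem_cons_of_mem hi))
        (fun i hi => hcc i (Finset.mem_cons_of_mem hi)),
      rootMult_X_pow_sub_C (ha j (Finset.mem_cons_self j s)) (hcc j (Finset.mem_cons_self j s)),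
      Finset.filter_cons]
    split_ifs with h <;> simp [h, Finset.card_cons]
    · rw [Finset.card_insert_of_notMem (by simp [Finset.mem_filter, hj])]; omega

lemma rootMult_gcd {A B : Polynomial ℂ} (hA : A ≠ 0) (hB : B ≠ 0) (x : ℂ) :
    (EuclideanDomain.gcd A B).rootMultiplicity x
      = min (A.rootMultiplicity x) (B.rootMultiplicity x) := by
  have hG : EuclideanDomain.gcd A B ≠ 0 := by
    intro h
    exact hA (EuclideanDomain.gcd_eq_zero_iff.mp h).1
  refine le_antisymm ?_ ?_
  · refine le_min ?_ ?_
    · obtain ⟨Q, hQ⟩ := EuclideanDomain.gcd_dvd_left A B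
      have h2 := rootMultiplicity_mul (p := EuclideanDomain.gcd A B) (q := Q) (x := x)
        (by rw [← hQ]; exact hA)
      rw [← hQ] at h2
      rw [h2]
      exact Nat.le_add_right _ _
    · obtain ⟨Q, hQ⟩ := EuclideanDomain.gcd_dvd_right A B
      have h2 := rootMultiplicity_mul (p := EuclideanDomain.gcd A B) (q := Q) (x := x)
        (by rw [← hQ]; exact hB)
      rw [← hQ] at h2
      rw [h2]
      exact Nat.le_add_right _ _
  · rw [le_rootMultiplicity_iff hG]
    refine EuclideanDomain.dvd_gcd ?_ ?_
    · exact dvd_trans (pow_dvd_pow _ (min_le_left _ _)) (pow_rootMultiplicity_dvd A x)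
    · exact dvd_trans (pow_dvd_pow _ (min_le_right _ _)) (pow_rootMultiplicity_dvd B x)

/-- The gcd polynomial `D_δ(T)`. -/
noncomputable def Dpoly (d : ℕ) (γ δ : Fin (d + 2) → ℤ) (N : ℕ) : Polynomial ℂ :=
  EuclideanDomain.gcd
    (∏ i ∈ Finset.univ.filter (fun i => γ i < 0),
      (X ^ (-(γ i)).toNat - C (zetaN N ^ (δ i))))
    (∏ i ∈ Finset.univ.filter (fun i => 0 < γ i),
      (X ^ (γ i).toNat - C (zetaN N ^ (-(δ i)))))

lemma Dpoly_rootMult (d : ℕ) (γ δ : Fin (d + 2) → ℤ) {N n e : ℕ} (hN : 0 < N) (hn : 0 < n)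
    (he : n = N * e) (m : ℤ) :
    (Dpoly d γ δ N).rootMultiplicity (zetaN n ^ m) =
      min ((Finset.univ.filter (fun i => γ i < 0 ∧
              (n : ℤ) ∣ (m * ((-(γ i)).toNat : ℤ) - (e : ℤ) * δ i))).card)
          ((Finset.univ.filter (fun i => 0 < γ i ∧
              (n : ℤ) ∣ (m * (((γ i)).toNat : ℤ) + (e : ℤ) * δ i))).card) := by
  classical
  have hiff : ∀ (a : ℕ) (dd : ℤ),
      ((zetaN n ^ m) ^ a = zetaN N ^ dd ↔ (n : ℤ) ∣ (m * a - e * dd)) := by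
    intro a dd
    rw [← zpow_natCast (zetaN n ^ m) a, ← zpow_mul, zetaN_mul hN hn he, ← zpow_mul, zpow_cond hn]
  have hAfac : ∀ i ∈ Finset.univ.filter (fun i => γ i < 0),
      (X ^ (-(γ i)).toNat - C (zetaN N ^ (δ i)) : Polynomial ℂ) ≠ 0 := by
    intro i hi
    simp only [Finset.mem_filter] at hi
    exact X_pow_sub_C_ne_zero (by omega) _
  have hBfac : ∀ i ∈ Finset.univ.filter (fun i => 0 < γ i),
      (X ^ (γ i).toNat - C (zetaN N ^ (-(δ i))) : Polynomial ℂ) ≠ 0 := by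
    intro i hi
    simp only [Finset.mem_filter] at hi
    exact X_pow_sub_C_ne_zero (by omega) _
  rw [Dpoly, rootMult_gcd (Finset.prod_ne_zero_iff.mpr hAfac) (Finset.prod_ne_zero_iff.mpr hBfac),
    rootMult_prod _ _ _ (by intro i hi; simp only [Finset.mem_filter] at hi; omega)
      (fun i _ => zpow_ne_zero _ (zetaN_ne_zero N)) _,
    rootMult_prod _ _ _ (by intro i hi; simp only [Finset.mem_filter] at hi; omega)
      (fun i _ => zpow_ne_zero _ (zetaN_ne_zero N)) _,
    Finset.filter_filter, Finset.filter_filter]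
  congr 1
  · congr 1
    apply Finset.filter_congr
    intro i _
    rw [and_congr_right_iff]
    intro _
    exact hiff _ _
  · congr 1
    apply Finset.filter_congr
    intro i _
    rw [and_congr_right_iff]
    intro _
    rw [hiff _ _, show m * (((γ i).toNat : ℕ) : ℤ) - (e : ℤ) * -(δ i)
      = m * (((γ i).toNat : ℕ) : ℤ) + (e : ℤ) * δ i from by ring]

/-- `s_δ(m)`: the multiplicity of `e^{2πim/(q-1)}` as a root of `D_δ(T)`. -/
noncomputable def sMult (q d : ℕ) (γ δ : Fin (d + 2) → ℤ) (N : ℕ) (m : ℤ) : ℕ :=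
  (Dpoly d γ δ N).rootMultiplicity
    (Complex.exp (2 * Real.pi * Complex.I * m / ((q : ℂ) - 1)))

lemma sMult_zeta (q d : ℕ) (γ δ : Fin (d + 2) → ℤ) (N : ℕ) (hq : 2 ≤ q) (m : ℤ) :
    sMult q d γ δ N m = (Dpoly d γ δ N).rootMultiplicity (zetaN (q - 1) ^ m) := by
  rw [sMult, ← exp_zpow (by omega : 0 < q - 1)]
  congr 2
  rw [Nat.cast_sub (by omega : 1 ≤ q)]
  norm_num

lemma sMult_congr (q d : ℕ) (γ δ : Fin (d + 2) → ℤ) (N : ℕ) (hq : 2 ≤ q) {m m' : ℤ}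
    (h : ((q : ℤ) - 1) ∣ (m - m')) :
    sMult q d γ δ N m = sMult q d γ δ N m' := by
  rw [sMult_zeta q d γ δ N hq, sMult_zeta q d γ δ N hq]
  congr 1
  rw [zpow_cond (by omega : 0 < q - 1)]
  have : ((q - 1 : ℕ) : ℤ) = (q : ℤ) - 1 := by
    push_cast [Nat.cast_sub (by omega : 1 ≤ q)]; ring
  rw [this]
  exact h

lemma sMult_smul (q d : ℕ) (γ δ : Fin (d + 2) → ℤ) {N : ℕ} (hq : 2 ≤ q) (hN : 0 < N)
    (hNdvd : N ∣ q - 1) {k : ℕ} (hk : Nat.Coprime k (q - 1)) (m : ℤ) :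
    sMult q d γ (fun i => (k : ℤ) * δ i) N ((k : ℤ) * m) = sMult q d γ δ N m := by
  classical
  obtain ⟨e, he⟩ := hNdvd
  have hn : 0 < q - 1 := by omega
  have hcop : IsCoprime ((q - 1 : ℕ) : ℤ) (k : ℤ) := by
    rw [Int.isCoprime_iff_gcd_eq_one, Int.gcd_natCast_natCast]
    exact (Nat.coprime_comm.mp hk)
  have hdvd_iff : ∀ z : ℤ, ((q - 1 : ℕ) : ℤ) ∣ (k : ℤ) * z ↔ ((q - 1 : ℕ) : ℤ) ∣ z := by
    intro z
    constructor
    · intro h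
      exact hcop.dvd_of_dvd_mul_right (by rwa [mul_comm] at h)
    · intro h
      exact Dvd.dvd.mul_left h _
  rw [sMult_zeta q d γ _ N hq, sMult_zeta q d γ δ N hq,
    Dpoly_rootMult d γ _ hN hn he, Dpoly_rootMult d γ δ hN hn he]
  congr 1
  · congr 1
    apply Finset.filter_congr
    intro i _
    rw [and_congr_right_iff]
    intro _
    rw [show (k : ℤ) * m * ((-(γ i)).toNat : ℤ) - (e : ℤ) * ((k : ℤ) * δ i)
      = (k : ℤ) * (m * ((-(γ i)).toNat : ℤ) - (e : ℤ) * δ i) from by ring]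
    exact hdvd_iff _
  · congr 1
    apply Finset.filter_congr
    intro i _
    rw [and_congr_right_iff]
    intro _
    rw [show (k : ℤ) * m * (((γ i)).toNat : ℤ) + (e : ℤ) * ((k : ℤ) * δ i)
      = (k : ℤ) * (m * (((γ i)).toNat : ℤ) + (e : ℤ) * δ i) from by ring]
    exact hdvd_iff _

/-- The Gauss sum `g(m) = Σ_{x∈F^×} ω^m(x) Θ(x)`. -/
noncomputable def gSum (F : Type) [Field F] [Fintype F] [DecidableEq F]
    (ω : MulChar F ℂ) (Θ : AddChar F ℂ) (m : ℤ) : ℂ :=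
  ∑ x : Fˣ, (ω ^ m) (x : F) * Θ (x : F)

section CharLemmas

variable {F : Type} [Field F] [Fintype F] [DecidableEq F]

lemma mulchar_val_pow (χ : MulChar F ℂ) (u : Fˣ) :
    χ (u : F) ^ (Fintype.card F - 1) = 1 := by
  rw [← map_pow, FiniteField.pow_card_sub_one_eq_one (u : F) (Units.ne_zero u), map_one]

lemma mulchar_val_ne_zero (χ : MulChar F ℂ) (u : Fˣ) : χ (u : F) ≠ 0 := by
  intro h
  have := mulchar_val_pow χ u
  rw [h, zero_pow (by have := Fintype.one_lt_card (α := F); omega)] at this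
  exact zero_ne_one this

lemma mulchar_zpow_apply (χ : MulChar F ℂ) (j : ℤ) (u : Fˣ) :
    (χ ^ j) (u : F) = χ (u : F) ^ j := by
  obtain ⟨i⟩ | ⟨i⟩ := j
  · rw [Int.ofNat_eq_coe, zpow_natCast, zpow_natCast, MulChar.pow_apply_coe]
  · rw [zpow_negSucc, zpow_negSucc, MulChar.inv_apply_eq_inv', MulChar.pow_apply_coe]

lemma mulchar_pow_card_sub_one (ω : MulChar F ℂ) :
    ω ^ ((Fintype.card F - 1 : ℕ) : ℤ) = 1 := by
  rw [zpow_natCast]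
  apply MulChar.ext
  intro u
  rw [MulChar.pow_apply_coe, mulchar_val_pow, MulChar.one_apply_coe]

lemma mulchar_zpow_congr (ω : MulChar F ℂ) {a b : ℤ}
    (h : ((Fintype.card F - 1 : ℕ) : ℤ) ∣ a - b) : ω ^ a = ω ^ b := by
  obtain ⟨c, hc⟩ := h
  have : a = b + ((Fintype.card F - 1 : ℕ) : ℤ) * c := by omega
  rw [this, zpow_add, zpow_mul, mulchar_pow_card_sub_one, one_zpow, mul_one]

lemma gSum_congr (ω : MulChar F ℂ) (Θ : AddChar F ℂ) {a b : ℤ}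
    (h : ((Fintype.card F - 1 : ℕ) : ℤ) ∣ a - b) : gSum F ω Θ a = gSum F ω Θ b := by
  unfold gSum
  rw [mulchar_zpow_congr ω h]

lemma sum_units_eq (f : F → ℂ) (hf : f 0 = 0) : ∑ x : Fˣ, f (x : F) = ∑ x : F, f x := by
  classical
  rw [show (∑ x : F, f x) = ∑ x ∈ Finset.univ.filter (fun x : F => x ≠ 0), f x from
    (Finset.sum_subset (Finset.filter_subset _ _) (by
      intro x _ hx
      simp only [Finset.mem_filter, Finset.mem_univ, true_and, not_not] at hx
      rw [hx, hf])).symm]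
  rw [Finset.sum_subtype (p := fun x : F => x ≠ 0) (Finset.univ.filter (fun x : F => x ≠ 0))
    (by intro x; simp) f]
  exact Fintype.sum_equiv unitsEquivNeZero _ _ (fun u => rfl)

lemma gSum_eq_gaussSum (ω : MulChar F ℂ) (Θ : AddChar F ℂ) (m : ℤ) :
    gSum F ω Θ m = gaussSum (ω ^ m) Θ := by
  rw [gSum, gaussSum]
  exact sum_units_eq (fun x => (ω ^ m) x * Θ x)
    (by show (ω ^ m) (0 : F) * Θ 0 = 0
        rw [MulChar.map_nonunit _ not_isUnit_zero, zero_mul])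

lemma gSum_ne_zero (ω : MulChar F ℂ) {Θ : AddChar F ℂ} (hΘ : Θ ≠ 1) (m : ℤ) :
    gSum F ω Θ m ≠ 0 := by
  rw [gSum_eq_gaussSum]
  by_cases h : ω ^ m = 1
  · rw [h]
    have hcalc : gaussSum (1 : MulChar F ℂ) Θ = -1 := by
      rw [gaussSum]
      have h0 : ∀ x : F, (1 : MulChar F ℂ) x * Θ x = Θ x - if x = 0 then 1 else 0 := by
        intro x
        by_cases hx : x = 0
        · subst hx
          rw [MulChar.map_nonunit _ not_isUnit_zero, zero_mul, AddChar.map_zero_eq_one,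
            if_pos rfl, sub_self]
        · rw [MulChar.one_apply (isUnit_iff_ne_zero.mpr hx), one_mul, if_neg hx, sub_zero]
      simp_rw [h0]
      rw [Finset.sum_sub_distrib, AddChar.sum_eq_zero_iff_ne_zero.mpr
        (by intro hh; exact hΘ (hh.trans rfl)), Finset.sum_ite_eq' Finset.univ (0 : F)]
      simp
    rw [hcalc]
    norm_num
  · exact gaussSum_ne_zero_of_nontrivial
      (Nat.cast_ne_zero.mpr Fintype.card_ne_zero) h (AddChar.IsPrimitive.of_ne_one hΘ)

end CharLemmas

lemma modinv_cancel {n k k' : ℕ} (hn : 1 < n) (hkk' : (k * k') % n = 1) {m : ℕ} (hm : m < n) :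
    k' * (k * m % n) % n = m := by
  have hkk : k * k' ≡ 1 [MOD n] := by
    unfold Nat.ModEq
    rw [hkk', Nat.mod_eq_of_lt hn]
  have h : k' * (k * m % n) ≡ m [MOD n] := by
    calc k' * (k * m % n) ≡ k' * (k * m) [MOD n] := Nat.ModEq.mul_left _ (Nat.mod_modEq _ _)
    _ = (k * k') * m := by ring
    _ ≡ 1 * m [MOD n] := Nat.ModEq.mul_right _ hkk
    _ = m := one_mul m
  have := h
  unfold Nat.ModEq at this
  rwa [Nat.mod_eq_of_lt hm] at this

/-- The finite hypergeometric sum `F_q(γ, δ, N | t)` of a gamma triple. -/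
noncomputable def Fhyp (F : Type) [Field F] [Fintype F] [DecidableEq F]
    (ω : MulChar F ℂ) (Θ : AddChar F ℂ)
    (d : ℕ) (γ δ : Fin (d + 2) → ℤ) (N : ℕ) (t : F) : ℂ :=
  (1 / (1 - (Fintype.card F : ℂ))) *
    ∑ m ∈ Finset.range (Fintype.card F - 1),
      (∏ i, gSum F ω Θ (-(γ i) * (m : ℤ) + δ i * (((Fintype.card F - 1) / N : ℕ) : ℤ)) /
            gSum F ω Θ (δ i * (((Fintype.card F - 1) / N : ℕ) : ℤ))) *
      (Fintype.card F : ℂ) ^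
        ((sMult (Fintype.card F) d γ δ N (-(m : ℤ)) : ℤ) -
         (sMult (Fintype.card F) d γ δ N 0 : ℤ)) *
      (ω ((∏ i, (γ i : F) ^ (γ i)) * t)) ^ m

theorem Fhyp_galois_action (F : Type) [Field F] [Fintype F] [DecidableEq F]
    (hodd : Odd (Fintype.card F))
    (ω : MulChar F ℂ) (hω : ∀ χ : MulChar F ℂ, ∃ m : ℤ, χ = ω ^ m)
    (Θ : AddChar F ℂ) (hΘ : Θ ≠ 1)
    (d : ℕ) (γ δ : Fin (d + 2) → ℤ)
    (hsum : ∑ i, γ i = 0) (hgcd : Finset.univ.gcd γ = 1)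
    (N : ℕ) (hN : 0 < N) (hNdvd : N ∣ Fintype.card F - 1)
    (t : F) (ht : t ≠ 0)
    (k : ℕ) (hk : Nat.Coprime k (Fintype.card F - 1))
    (σ : ℂ →+* ℂ)
    (hσ : σ (zetaN (Fintype.card F - 1)) = zetaN (Fintype.card F - 1) ^ k) :
    σ (Fhyp F ω Θ d γ δ N t) = Fhyp F ω Θ d γ (fun i => (k : ℤ) * δ i) N t := by
  classical
  have h2q : 2 ≤ Fintype.card F := Fintype.one_lt_card
  have h3q : 3 ≤ Fintype.card F := by
    rcases hodd with ⟨r, hr⟩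
    omega
  have hn : 0 < Fintype.card F - 1 := by omega
  have hn1 : 1 < Fintype.card F - 1 := by omega
  have hk0 : 0 < k := by
    rcases Nat.eq_zero_or_pos k with rfl | h
    · rw [Nat.coprime_zero_left] at hk; omega
    · exact h
  obtain ⟨k', -, hk'⟩ := Nat.exists_mul_mod_eq_one_of_coprime hk hn1
  -- σ acts as z ↦ z^k on (q-1)-th roots of unity
  have hσroot : ∀ z : ℂ, z ^ (Fintype.card F - 1) = 1 → σ z = z ^ k :=
    fun z hz => sigma_pow_of_pow_eq_one hn (zetaN_prim hn) σ hσ hz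
  have hσχ : ∀ (χ : MulChar F ℂ) (x : F), σ (χ x) = χ x ^ k := by
    intro χ x
    by_cases hx : IsUnit x
    · obtain ⟨u, rfl⟩ := hx
      exact hσroot _ (mulchar_val_pow χ u)
    · rw [MulChar.map_nonunit χ hx, map_zero, zero_pow hk0.ne']
  -- σ acts on Θ through a multiplicative shift
  have hp : (ringChar F).Prime := CharP.char_is_prime F (ringChar F)
  have hΘpow : ∀ x : F, Θ x ^ (ringChar F) = 1 := by
    intro x
    rw [← AddChar.map_nsmul_eq_pow, nsmul_eq_mul, CharP.cast_eq_zero F (ringChar F), zero_mul,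
      AddChar.map_zero_eq_one]
  obtain ⟨x₀, hx₀⟩ := AddChar.ne_one_iff.mp hΘ
  have hζp : IsPrimitiveRoot (Θ x₀) (ringChar F) := by
    have hord : orderOf (Θ x₀) ∣ ringChar F := orderOf_dvd_of_pow_eq_one (hΘpow x₀)
    rcases (Nat.Prime.eq_one_or_self_of_dvd hp _ hord) with h1 | h1
    · exact absurd (orderOf_eq_one_iff.mp h1) hx₀
    · rw [← h1]; exact IsPrimitiveRoot.orderOf _
  haveI : NeZero (ringChar F) := ⟨hp.pos.ne'⟩
  have hσζp : (σ (Θ x₀)) ^ (ringChar F) = 1 := by rw [← map_pow, hΘpow, map_one]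
  obtain ⟨b, hbp, hb⟩ := hζp.eq_pow_of_pow_eq_one hσζp
  have hb0 : b ≠ 0 := by
    rintro rfl
    rw [pow_zero] at hb
    exact hx₀ (σ.injective (by rw [hb.symm, map_one]))
  have hσΘ : ∀ x : F, σ (Θ x) = Θ ((b : F) * x) := by
    intro x
    rw [sigma_pow_of_pow_eq_one hp.pos hζp σ hb.symm (hΘpow x),
      ← AddChar.map_nsmul_eq_pow, nsmul_eq_mul]
  have hc0 : (b : F) ≠ 0 := by
    rw [Ne, CharP.cast_eq_zero_iff F (ringChar F) b]
    intro hdvd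
    exact absurd (Nat.le_of_dvd (Nat.pos_of_ne_zero hb0) hdvd) (by omega)
  set cu : Fˣ := Units.mk0 (b : F) hc0 with hcudef
  -- action of σ on Gauss sums
  have hσg : ∀ a : ℤ, σ (gSum F ω Θ a) =
      ω (((cu⁻¹ : Fˣ) : F)) ^ ((k : ℤ) * a) * gSum F ω Θ ((k : ℤ) * a) := by
    intro a
    rw [gSum, map_sum]
    have h1 : ∀ u : Fˣ, σ ((ω ^ a) (u : F) * Θ (u : F))
        = (ω ^ ((k : ℤ) * a)) ((u : F)) * Θ ((cu : F) * (u : F)) := by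
      intro u
      rw [map_mul, hσχ (ω ^ a), hσΘ]
      have hθeq : Θ ((b : F) * (u : F)) = Θ ((cu : F) * (u : F)) := rfl
      rw [hθeq, mulchar_zpow_apply, mulchar_zpow_apply, ← zpow_natCast (ω (u : F) ^ a) k,
        ← zpow_mul, mul_comm a (k : ℤ)]
    simp_rw [h1]
    have h2 : (∑ u : Fˣ, (ω ^ ((k : ℤ) * a)) (((cu⁻¹ * u : Fˣ) : F))
          * Θ ((cu : F) * ((cu⁻¹ * u : Fˣ) : F)))
        = ∑ u : Fˣ, (ω ^ ((k : ℤ) * a)) ((u : F)) * Θ ((cu : F) * (u : F)) :=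
      Fintype.sum_equiv (Equiv.mulLeft cu⁻¹) _ _ (fun u => rfl)
    rw [← h2]
    have h3 : ∀ u : Fˣ, (ω ^ ((k : ℤ) * a)) (((cu⁻¹ * u : Fˣ) : F))
          * Θ ((cu : F) * ((cu⁻¹ * u : Fˣ) : F))
        = (ω ^ ((k : ℤ) * a)) (((cu⁻¹ : Fˣ) : F)) * ((ω ^ ((k : ℤ) * a)) ((u : F)) * Θ (u : F)) := by
      intro u
      rw [show (cu : F) * ((cu⁻¹ * u : Fˣ) : F) = (u : F) from by
          rw [← Units.val_mul, mul_inv_cancel_left],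
        Units.val_mul, map_mul, mul_assoc]
    simp_rw [h3]
    rw [← Finset.mul_sum, ← gSum, mulchar_zpow_apply]
  set w : ℂ := ω (((cu⁻¹ : Fˣ) : F)) with hwdef
  have hw : w ≠ 0 := mulchar_val_ne_zero ω cu⁻¹
  -- main computation
  simp only [Fhyp]
  rw [map_mul, map_sum]
  congr 1
  · rw [map_div₀, map_one, map_sub, map_one, map_natCast]
  refine Finset.sum_nbij' (fun m => k * m % (Fintype.card F - 1))
    (fun m => k' * m % (Fintype.card F - 1)) ?_ ?_ ?_ ?_ ?_
  · intro m _
    exact Finset.mem_range.mpr (Nat.mod_lt _ hn)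
  · intro m _
    exact Finset.mem_range.mpr (Nat.mod_lt _ hn)
  · intro m hm
    exact modinv_cancel hn1 hk' (Finset.mem_range.mp hm)
  · intro m hm
    exact modinv_cancel hn1 (by rwa [mul_comm k' k]) (Finset.mem_range.mp hm)
  · intro m hm
    have hmlt : m < Fintype.card F - 1 := Finset.mem_range.mp hm
    set n : ℕ := Fintype.card F - 1 with hndef
    set j : ℕ := k * m % n with hjdef
    have hjd : ((n : ℕ) : ℤ) ∣ ((k * m : ℕ) : ℤ) - ((j : ℕ) : ℤ) := by
      have h := Nat.mod_add_div (k * m) n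
      refine ⟨((k * m) / n : ℕ), ?_⟩
      have hcast : ((k * m : ℕ) : ℤ) = ((j : ℕ) : ℤ) + (n : ℤ) * (((k * m) / n : ℕ) : ℤ) := by
        rw [hjdef]
        exact_mod_cast h.symm
      omega
    rw [map_mul, map_mul]
    congr 1
    · congr 1
      · -- product of Gauss sum ratios
        rw [map_prod]
        calc ∏ i, σ (gSum F ω Θ (-(γ i) * (m : ℤ) + δ i * ((n / N : ℕ) : ℤ)) /
                gSum F ω Θ (δ i * ((n / N : ℕ) : ℤ)))
            = ∏ i, (w ^ ((k : ℤ) * (-(γ i)) * (m : ℤ)) *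
                (gSum F ω Θ (-(γ i) * (j : ℤ) + (k : ℤ) * δ i * ((n / N : ℕ) : ℤ)) /
                  gSum F ω Θ ((k : ℤ) * δ i * ((n / N : ℕ) : ℤ)))) := by
              apply Finset.prod_congr rfl
              intro i _
              rw [map_div₀, hσg, hσg, mul_div_mul_comm, ← zpow_sub₀ hw]
              congr 1
              · congr 1
                ring
              · congr 1
                · apply gSum_congr
                  rw [show (k : ℤ) * (-(γ i) * (m : ℤ) + δ i * ((n / N : ℕ) : ℤ)) -
                      (-(γ i) * (j : ℤ) + (k : ℤ) * δ i * ((n / N : ℕ) : ℤ))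
                      = -(γ i) * (((k * m : ℕ) : ℤ) - ((j : ℕ) : ℤ)) from by push_cast; ring]
                  exact Dvd.dvd.mul_left hjd _
                · congr 1
                  ring
          _ = (∏ i, w ^ ((k : ℤ) * (-(γ i)) * (m : ℤ))) *
              ∏ i, (gSum F ω Θ (-(γ i) * (j : ℤ) + (k : ℤ) * δ i * ((n / N : ℕ) : ℤ)) /
                gSum F ω Θ ((k : ℤ) * δ i * ((n / N : ℕ) : ℤ))) := Finset.prod_mul_distrib
          _ = ∏ i, (gSum F ω Θ (-(γ i) * (j : ℤ) + (k : ℤ) * δ i * ((n / N : ℕ) : ℤ)) /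
                gSum F ω Θ ((k : ℤ) * δ i * ((n / N : ℕ) : ℤ))) := by
              rw [prod_zpow' _ _ hw, show ∑ i, ((k : ℤ) * (-(γ i)) * (m : ℤ))
                  = -((k : ℤ) * (m : ℤ)) * ∑ i, γ i from by
                rw [Finset.mul_sum]
                apply Finset.sum_congr rfl
                intro i _
                ring]
              rw [hsum, mul_zero, zpow_zero, one_mul]
      · -- power of q
        rw [map_zpow₀, map_natCast]
        congr 1
        have e1 : sMult (Fintype.card F) d γ δ N (-(m : ℤ))
            = sMult (Fintype.card F) d γ (fun i => (k : ℤ) * δ i) N (-(j : ℤ)) := by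
          rw [← sMult_smul (Fintype.card F) d γ δ h2q hN hNdvd hk (-(m : ℤ))]
          apply sMult_congr _ _ _ _ _ h2q
          have hcast : ((n : ℕ) : ℤ) = (Fintype.card F : ℤ) - 1 := by
            rw [hndef]
            push_cast [Nat.cast_sub (by omega : 1 ≤ Fintype.card F)]
            ring
          rw [← hcast, show (k : ℤ) * -(m : ℤ) - -(j : ℤ)
            = -(((k * m : ℕ) : ℤ) - ((j : ℕ) : ℤ)) from by push_cast; ring]
          exact hjd.neg_right
        have e0 : sMult (Fintype.card F) d γ δ N 0
            = sMult (Fintype.card F) d γ (fun i => (k : ℤ) * δ i) N 0 := by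
          have := sMult_smul (Fintype.card F) d γ δ h2q hN hNdvd hk 0
          rw [mul_zero] at this
          exact this.symm
        rw [e1, e0]
    · -- character power
      rw [map_pow, hσχ ω, ← pow_mul]
      by_cases hb : IsUnit ((∏ i, (γ i : F) ^ (γ i)) * t)
      · obtain ⟨u, hu⟩ := hb
        rw [← hu]
        exact pow_eq_pow_mod _ (mulchar_val_pow ω u)
      · rw [MulChar.map_nonunit ω hb]
        rcases Nat.eq_zero_or_pos m with rfl | hm0
        · simp [hjdef]
        · have hkm : k * m ≠ 0 := by positivity
          have hj0 : j ≠ 0 := by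
            rw [hjdef]
            intro h0
            have hdvd : n ∣ k * m := Nat.dvd_of_mod_eq_zero h0
            have : n ∣ m := (Nat.Coprime.dvd_of_dvd_mul_left
              (Nat.coprime_comm.mp hk) hdvd)
            exact absurd (Nat.le_of_dvd hm0 this) (by omega)
          rw [zero_pow hkm, zero_pow hj0]
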